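/- Fix an n_t × n_t positive semidefinite matrix K̄ and channel matrices H_r, H_e. The function mapping a valid noise covariance K_Φ = [[I, Φ],[Φ†, I]] ⪰ 0 (with Φ The cross-covariance) to the conditional mutual information I(x; y_r | y_e), where x ~ CN(0, K̄), y_r = H_r x + z_r, y_e = H_e x + z_e, and (z_r, z_e) ~ CN(0, K_Φ), equals log det(K_Φ + H_t K̄ H_t†) − log det(K_Φ) − log det(I + H_e K̄ H_e†) when K_Φ is positive definite, where H_t = [H_r; H_e] is the stacked matrix. In particular this function is convex in K_Φ on the set of positive definite K_Φ with identity diagonal blocks. -/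

import Mathlib

open Matrix
open scoped ComplexOrder

variable {n m : Type*} [Fintype n] [DecidableEq n] [Fintype m] [DecidableEq m]

lemma det_re_pos {M : Matrix n n ℂ} (hM : M.PosDef) : 0 < M.det.re :=
  ((Complex.pos_iff).mp hM.det_pos).1

lemma det_eq_re {M : Matrix n n ℂ} (hM : M.PosDef) : M.det = (M.det.re : ℂ) := by
  have := (Complex.pos_iff).mp hM.det_pos
  exact Complex.ext rfl (by simp [← this.2])

lemma real_smul_eq (a : ℝ) (M : Matrix n m ℂ) : a • M = (a : ℂ) • M := by
  ext i j; simp [Complex.real_smul]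

lemma psd_posDef_of_det_ne_zero {M : Matrix n n ℂ} (hM : M.PosSemidef) (h : M.det ≠ 0) :
    M.PosDef := by
  refine posDef_iff_dotProduct_mulVec.mpr ⟨hM.isHermitian, fun x hx => ?_⟩
  refine (hM.dotProduct_mulVec_nonneg x).lt_of_ne' fun h0 => hx ?_
  have hMx := (hM.dotProduct_mulVec_zero_iff x).mp h0
  have hinj : Function.Injective (M.mulVec) :=
    mulVec_injective_iff_isUnit.mpr ((isUnit_iff_isUnit_det M).mpr h.isUnit)
  simpa using hinj (by simpa using hMx)

section SqrtCompat
open scoped MatrixOrder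

noncomputable def Matrix.PosSemidef.sqrt {A : Matrix n n ℂ} (_hA : A.PosSemidef) :
    Matrix n n ℂ := CFC.sqrt A

lemma Matrix.PosSemidef.posSemidef_sqrt {A : Matrix n n ℂ} (hA : A.PosSemidef) :
    hA.sqrt.PosSemidef := (CFC.sqrt_nonneg A).posSemidef

lemma Matrix.PosSemidef.sqrt_mul_self {A : Matrix n n ℂ} (hA : A.PosSemidef) :
    hA.sqrt * hA.sqrt = A := CFC.sqrt_mul_sqrt_self A hA.nonneg

end SqrtCompat

lemma posDef_sqrt {K : Matrix n n ℂ} (hK : K.PosDef) : hK.posSemidef.sqrt.PosDef := by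
  refine psd_posDef_of_det_ne_zero hK.posSemidef.posSemidef_sqrt fun h => ?_
  have hdet : K.det = 0 := by rw [← hK.posSemidef.sqrt_mul_self, det_mul, h, mul_zero]
  exact hK.det_pos.ne' hdet

lemma posDef_conj {A : Matrix n n ℂ} (hA : A.PosDef) {T : Matrix n n ℂ} (hT : T.det ≠ 0) :
    (Tᴴ * A * T).PosDef := by
  refine psd_posDef_of_det_ne_zero (hA.posSemidef.conjTranspose_mul_mul_same T) ?_
  rw [det_mul, det_mul, det_conjTranspose]
  exact mul_ne_zero (mul_ne_zero (star_ne_zero.mpr hT) hA.det_pos.ne') hT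

lemma det_smul_one_add_smul {C : Matrix n n ℂ} (hC : C.IsHermitian) (a b : ℝ) :
    ((a : ℂ) • 1 + (b : ℂ) • C).det = ((∏ i, (a + b * hC.eigenvalues i) : ℝ) : ℂ) := by
  set U : Matrix n n ℂ := (hC.eigenvectorUnitary : Matrix n n ℂ)
  have hU : U * star U = 1 := (Matrix.mem_unitaryGroup_iff).mp hC.eigenvectorUnitary.2
  have key : (a : ℂ) • 1 + (b : ℂ) • C
      = U * ((a : ℂ) • 1 + (b : ℂ) • diagonal (RCLike.ofReal ∘ hC.eigenvalues)) * star U := by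
    rw [Matrix.mul_add, Matrix.add_mul]
    rw [Matrix.mul_smul, Matrix.mul_smul, Matrix.smul_mul, Matrix.smul_mul,
      Matrix.mul_one, hU]
    congr 1
    conv_lhs => rw [hC.spectral_theorem]
    rw [Unitary.conjStarAlgAut_apply]
  rw [key, det_mul, det_mul, mul_right_comm, ← det_mul, hU, det_one, one_mul]
  have : (a : ℂ) • (1 : Matrix n n ℂ) + (b : ℂ) • diagonal (RCLike.ofReal ∘ hC.eigenvalues)
      = diagonal (fun i => ((a + b * hC.eigenvalues i : ℝ) : ℂ)) := by
    rw [← diagonal_one, ← diagonal_smul, ← diagonal_smul]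
    rw [diagonal_add]
    congr 1; funext i
    simp [Function.comp, Complex.ofReal_add, Complex.ofReal_mul]
  rw [this, det_diagonal]
  push_cast
  rfl

lemma det_one_add_psd {X : Matrix n n ℂ} (hX : X.PosSemidef) :
    ∃ r : ℝ, (1 + X).det = (r : ℂ) ∧ 1 ≤ r := by
  refine ⟨∏ i, (1 + 1 * hX.isHermitian.eigenvalues i), ?_, ?_⟩
  · have h := det_smul_one_add_smul hX.isHermitian 1 1
    simpa using h
  · calc (1:ℝ) = ∏ _i : n, 1 := by simp
      _ ≤ ∏ i, (1 + 1 * hX.isHermitian.eigenvalues i) := by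
        refine Finset.prod_le_prod (fun i _ => by norm_num) (fun i _ => ?_)
        have h0 : 0 ≤ hX.isHermitian.eigenvalues i := hX.eigenvalues_nonneg i
        linarith

lemma det_re_add_psd {P S : Matrix n n ℂ} (hP : P.PosDef) (hS : S.PosSemidef) :
    P.det.re ≤ (P + S).det.re := by
  set Sq := hP.posSemidef.sqrt with hSqdef
  have hSq : Sq.PosDef := posDef_sqrt hP
  set T := Sq⁻¹ with hTdef
  have hT : T.PosDef := hSq.inv
  have hTh : Tᴴ = T := hT.isHermitian
  have hST : Sq * T = 1 := mul_nonsing_inv _ hSq.det_pos.ne'.isUnit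
  have hTS : T * Sq = 1 := nonsing_inv_mul _ hSq.det_pos.ne'.isUnit
  have hSS : Sq * Sq = P := hP.posSemidef.sqrt_mul_self
  have hX : (Tᴴ * S * T).PosSemidef := hS.conjTranspose_mul_mul_same T
  have hcong : Sq * (Tᴴ * S * T) * Sq = S := by
    rw [hTh]
    have : Sq * (T * S * T) * Sq = (Sq * T) * S * (T * Sq) := by
      simp only [Matrix.mul_assoc]
    rw [this, hST, hTS, Matrix.one_mul, Matrix.mul_one]
  have key : P + S = Sq * (1 + Tᴴ * S * T) * Sq := by
    rw [Matrix.mul_add, Matrix.add_mul, Matrix.mul_one, hSS, hcong]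
  obtain ⟨r, hr, hr1⟩ := det_one_add_psd hX
  have hdet : (P + S).det = ((P.det.re * r : ℝ) : ℂ) := by
    rw [key, det_mul, det_mul, mul_right_comm, ← det_mul, hSS, hr, det_eq_re hP]
    push_cast [Complex.ofReal_re]; ring
  rw [hdet, Complex.ofReal_re]
  nlinarith [det_re_pos hP]

lemma log_det_concave {A B : Matrix n n ℂ} (hA : A.PosDef) (hB : B.PosDef)
    {a b : ℝ} (ha : 0 < a) (hb : 0 < b) (hab : a + b = 1) :
    a * Real.log A.det.re + b * Real.log B.det.re ≤ Real.log ((a • A + b • B).det.re) := by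
  set Sq := hA.posSemidef.sqrt with hSqdef
  have hSq : Sq.PosDef := posDef_sqrt hA
  set T := Sq⁻¹ with hTdef
  have hT : T.PosDef := hSq.inv
  have hTh : Tᴴ = T := hT.isHermitian
  have hST : Sq * T = 1 := mul_nonsing_inv _ hSq.det_pos.ne'.isUnit
  have hTS : T * Sq = 1 := nonsing_inv_mul _ hSq.det_pos.ne'.isUnit
  have hSS : Sq * Sq = A := hA.posSemidef.sqrt_mul_self
  have hC : (Tᴴ * B * T).PosDef := posDef_conj hB hT.det_pos.ne'
  set C := Tᴴ * B * T with hCdef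
  set μ : n → ℝ := hC.isHermitian.eigenvalues with hμdef
  have hμ : ∀ i, 0 < μ i := hC.eigenvalues_pos
  have hSCS : Sq * C * Sq = B := by
    rw [hCdef, hTh]
    have : Sq * (T * B * T) * Sq = (Sq * T) * B * (T * Sq) := by
      simp only [Matrix.mul_assoc]
    rw [this, hST, hTS, Matrix.one_mul, Matrix.mul_one]
  have key : a • A + b • B = Sq * ((a : ℂ) • 1 + (b : ℂ) • C) * Sq := by
    rw [Matrix.mul_add, Matrix.add_mul, Matrix.mul_smul, Matrix.mul_smul, Matrix.smul_mul,
      Matrix.smul_mul, Matrix.mul_one, hSS, hSCS, real_smul_eq, real_smul_eq]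
  have hdetX := det_smul_one_add_smul hC.isHermitian a b
  have hdetC : C.det = ((∏ i, μ i : ℝ) : ℂ) := by
    rw [hC.isHermitian.det_eq_prod_eigenvalues]; push_cast; rfl
  have hdet1 : (a • A + b • B).det = ((A.det.re * ∏ i, (a + b * μ i) : ℝ) : ℂ) := by
    rw [key, det_mul, det_mul, mul_right_comm, ← det_mul, hSS, det_eq_re hA, hdetX]
    push_cast [Complex.ofReal_re]; ring
  have hdet2 : B.det = ((A.det.re * ∏ i, μ i : ℝ) : ℂ) := by
    rw [← hSCS, det_mul, det_mul, mul_right_comm, ← det_mul, hSS, det_eq_re hA, hdetC]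
    push_cast [Complex.ofReal_re]; ring
  have hre1 : (a • A + b • B).det.re = A.det.re * ∏ i, (a + b * μ i) := by
    rw [hdet1, Complex.ofReal_re]
  have hre2 : B.det.re = A.det.re * ∏ i, μ i := by rw [hdet2, Complex.ofReal_re]
  have hdApos : 0 < A.det.re := det_re_pos hA
  have habμ : ∀ i, 0 < a + b * μ i := fun i => by have := mul_pos hb (hμ i); linarith
  rw [hre1, hre2, Real.log_mul hdApos.ne' (Finset.prod_pos (fun i _ => hμ i)).ne',
    Real.log_mul hdApos.ne' (Finset.prod_pos (fun i _ => habμ i)).ne',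
    Real.log_prod (fun i _ => (hμ i).ne'),
    Real.log_prod (fun i _ => (habμ i).ne')]
  have hterm : ∀ i ∈ Finset.univ, b * Real.log (μ i) ≤ Real.log (a + b * μ i) := by
    intro i _
    have h := (strictConcaveOn_log_Ioi.concaveOn).2 (Set.mem_Ioi.mpr one_pos)
      (Set.mem_Ioi.mpr (hμ i)) ha.le hb.le hab
    simpa using h
  have hsum := Finset.sum_le_sum hterm
  have : a * Real.log A.det.re + b * (Real.log A.det.re + ∑ i, Real.log (μ i))
      = Real.log A.det.re + b * ∑ i, Real.log (μ i) := by
    linear_combination Real.log A.det.re * hab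
  rw [this]
  rw [Finset.mul_sum]
  linarith [hsum]


section Core

variable {n m : Type*} [Fintype n] [DecidableEq n] [Fintype m] [DecidableEq m]

lemma posDef_real_smul {M : Matrix n n ℂ} (hM : M.PosDef) {a : ℝ} (ha : 0 < a) :
    (a • M).PosDef := by
  rw [real_smul_eq]
  refine posDef_iff_dotProduct_mulVec.mpr ⟨?_, fun x hx => ?_⟩
  · rw [Matrix.IsHermitian, conjTranspose_smul, hM.isHermitian.eq]
    congr 1
    simp [Complex.star_def, Complex.conj_ofReal]
  · have hd := hM.dotProduct_mulVec_pos hx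
    rw [smul_mulVec, dotProduct_smul]
    rw [Complex.pos_iff] at hd ⊢
    constructor
    · simp only [smul_eq_mul, Complex.mul_re, Complex.ofReal_re, Complex.ofReal_im, zero_mul,
        sub_zero]
      exact mul_pos ha hd.1
    · simp only [smul_eq_mul, Complex.mul_im, Complex.ofReal_re, Complex.ofReal_im, zero_mul,
        add_zero, ← hd.2, mul_zero]

lemma Q_decomp (B : Matrix n m ℂ) {K : Matrix n n ℂ} (hK : K.PosDef) (W : Matrix n m ℂ) :
    (1 - Wᴴ * B) * (1 - Wᴴ * B)ᴴ + Wᴴ * K * W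
      = (1 - Bᴴ * (K + B * Bᴴ)⁻¹ * B)
        + ((K + B * Bᴴ) * W - B)ᴴ * (K + B * Bᴴ)⁻¹ * ((K + B * Bᴴ) * W - B) := by
  set N := K + B * Bᴴ with hNdef
  have hN : N.PosDef := hK.add_posSemidef (posSemidef_self_mul_conjTranspose B)
  have hNh : Nᴴ = N := hN.isHermitian
  haveI : Invertible N := hN.isUnit.invertible
  have hKN : K = N - B * Bᴴ := by rw [hNdef, add_sub_cancel_right]
  rw [hKN]
  simp only [Matrix.conjTranspose_sub, Matrix.conjTranspose_mul, Matrix.conjTranspose_one,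
    conjTranspose_conjTranspose, hNh]
  simp only [Matrix.sub_mul, Matrix.mul_sub, Matrix.mul_one, Matrix.one_mul, Matrix.mul_assoc,
    Matrix.mul_inv_cancel_left_of_invertible, Matrix.inv_mul_cancel_left_of_invertible]
  abel

lemma det_E (B : Matrix n m ℂ) {K : Matrix n n ℂ} (hK : K.PosDef) :
    (1 - Bᴴ * (K + B * Bᴴ)⁻¹ * B).det * (K + B * Bᴴ).det = K.det := by
  set N := K + B * Bᴴ with hNdef
  have hN : N.PosDef := hK.add_posSemidef (posSemidef_self_mul_conjTranspose B)
  haveI : Invertible N := hN.isUnit.invertible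
  have h1 : (1 : Matrix n n ℂ) - B * (Bᴴ * N⁻¹) = K * N⁻¹ := by
    have hK' : K = N - B * Bᴴ := by rw [hNdef, add_sub_cancel_right]
    rw [hK', Matrix.sub_mul, mul_inv_of_invertible, Matrix.mul_assoc]
  have h2 : (1 - Bᴴ * N⁻¹ * B).det = K.det * N⁻¹.det := by
    rw [det_one_sub_mul_comm, h1, det_mul]
  rw [h2, mul_assoc, det_nonsing_inv_mul_det _ hN.det_pos.ne'.isUnit, mul_one]

lemma E_posDef (B : Matrix n m ℂ) {K : Matrix n n ℂ} (hK : K.PosDef) :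
    (1 - Bᴴ * (K + B * Bᴴ)⁻¹ * B).PosDef := by
  set N := K + B * Bᴴ with hNdef
  have hN : N.PosDef := hK.add_posSemidef (posSemidef_self_mul_conjTranspose B)
  haveI : Invertible N := hN.isUnit.invertible
  set W := N⁻¹ * B with hWdef
  have hz : N * W - B = 0 := by
    rw [hWdef, Matrix.mul_inv_cancel_left_of_invertible, sub_self]
  have hQm := Q_decomp B hK W
  rw [← hNdef, hz] at hQm
  simp only [conjTranspose_zero, Matrix.zero_mul, Matrix.mul_zero, add_zero] at hQm
  have hpsd : (1 - Bᴴ * N⁻¹ * B).PosSemidef := by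
    rw [← hQm]
    exact (posSemidef_self_mul_conjTranspose _).add
      (hK.posSemidef.conjTranspose_mul_mul_same W)
  refine psd_posDef_of_det_ne_zero hpsd fun h0 => ?_
  have h := det_E B hK
  rw [← hNdef, h0, zero_mul] at h
  exact hK.det_pos.ne' h.symm

lemma g_eq (B : Matrix n m ℂ) {K : Matrix n n ℂ} (hK : K.PosDef) :
    Real.log ((K + B * Bᴴ).det.re) - Real.log (K.det.re)
      = - Real.log ((1 - Bᴴ * (K + B * Bᴴ)⁻¹ * B).det.re) := by
  have hN : (K + B * Bᴴ).PosDef := hK.add_posSemidef (posSemidef_self_mul_conjTranspose B)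
  have hE := E_posDef B hK
  have h := det_E B hK
  rw [det_eq_re hE, det_eq_re hN, det_eq_re hK, ← Complex.ofReal_mul] at h
  have hre : (1 - Bᴴ * (K + B * Bᴴ)⁻¹ * B).det.re * (K + B * Bᴴ).det.re = K.det.re :=
    Complex.ofReal_injective h
  rw [← hre, Real.log_mul (det_re_pos hE).ne' (det_re_pos hN).ne']
  ring

lemma core_ineq (B : Matrix n m ℂ) {M1 M2 : Matrix n n ℂ} (h1 : M1.PosDef) (h2 : M2.PosDef)
    {a b : ℝ} (ha : 0 < a) (hb : 0 < b) (hab : a + b = 1) :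
    Real.log ((a • M1 + b • M2 + B * Bᴴ).det.re) - Real.log ((a • M1 + b • M2).det.re)
      ≤ a * (Real.log ((M1 + B * Bᴴ).det.re) - Real.log (M1.det.re))
        + b * (Real.log ((M2 + B * Bᴴ).det.re) - Real.log (M2.det.re)) := by
  have hm : (a • M1 + b • M2).PosDef :=
    (posDef_real_smul h1 ha).add (posDef_real_smul h2 hb)
  set Km := a • M1 + b • M2 with hKmdef
  set N := Km + B * Bᴴ with hNdef
  have hN : N.PosDef := hm.add_posSemidef (posSemidef_self_mul_conjTranspose B)
  haveI : Invertible N := hN.isUnit.invertible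
  set W := N⁻¹ * B with hWdef
  have hz : N * W - B = 0 := by
    rw [hWdef, Matrix.mul_inv_cancel_left_of_invertible, sub_self]
  have hQm := Q_decomp B hm W
  rw [← hNdef, hz] at hQm
  simp only [conjTranspose_zero, Matrix.zero_mul, Matrix.mul_zero, add_zero] at hQm
  set C : Matrix m m ℂ := (1 - Wᴴ * B) * (1 - Wᴴ * B)ᴴ with hCdef
  set Q1 : Matrix m m ℂ := C + Wᴴ * M1 * W with hQ1def
  set Q2 : Matrix m m ℂ := C + Wᴴ * M2 * W with hQ2def
  -- split : C + Wᴴ * Km * W = a • Q1 + b • Q2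
  have hsplit : C + Wᴴ * Km * W = a • Q1 + b • Q2 := by
    rw [hQ1def, hQ2def, smul_add, smul_add, hKmdef]
    simp only [Matrix.mul_add, Matrix.add_mul, Matrix.mul_smul, Matrix.smul_mul]
    have hC : C = a • C + b • C := by rw [← add_smul, hab, one_smul]
    conv_lhs => rw [hC]
    abel
  -- Q1, Q2 posdef, and det bounds
  have hQd1 := Q_decomp B h1 W
  have hQd2 := Q_decomp B h2 W
  have hE1 := E_posDef B h1
  have hE2 := E_posDef B h2
  have hN1 : (M1 + B * Bᴴ).PosDef := h1.add_posSemidef (posSemidef_self_mul_conjTranspose B)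
  have hN2 : (M2 + B * Bᴴ).PosDef := h2.add_posSemidef (posSemidef_self_mul_conjTranspose B)
  have hP1 : (((M1 + B * Bᴴ) * W - B)ᴴ * (M1 + B * Bᴴ)⁻¹ * ((M1 + B * Bᴴ) * W - B)).PosSemidef :=
    hN1.inv.posSemidef.conjTranspose_mul_mul_same _
  have hP2 : (((M2 + B * Bᴴ) * W - B)ᴴ * (M2 + B * Bᴴ)⁻¹ * ((M2 + B * Bᴴ) * W - B)).PosSemidef :=
    hN2.inv.posSemidef.conjTranspose_mul_mul_same _
  have hQ1pd : Q1.PosDef := by rw [hQ1def, hCdef, hQd1]; exact hE1.add_posSemidef hP1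
  have hQ2pd : Q2.PosDef := by rw [hQ2def, hCdef, hQd2]; exact hE2.add_posSemidef hP2
  have hd1 : (1 - Bᴴ * (M1 + B * Bᴴ)⁻¹ * B).det.re ≤ Q1.det.re := by
    rw [hQ1def, hCdef, hQd1]; exact det_re_add_psd hE1 hP1
  have hd2 : (1 - Bᴴ * (M2 + B * Bᴴ)⁻¹ * B).det.re ≤ Q2.det.re := by
    rw [hQ2def, hCdef, hQd2]; exact det_re_add_psd hE2 hP2
  -- log-concavity at the midpoint
  have hconc := log_det_concave hQ1pd hQ2pd ha hb hab
  rw [← hsplit, hQm] at hconc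
  have hl1 : Real.log ((1 - Bᴴ * (M1 + B * Bᴴ)⁻¹ * B).det.re) ≤ Real.log (Q1.det.re) :=
    Real.log_le_log (det_re_pos hE1) hd1
  have hl2 : Real.log ((1 - Bᴴ * (M2 + B * Bᴴ)⁻¹ * B).det.re) ≤ Real.log (Q2.det.re) :=
    Real.log_le_log (det_re_pos hE2) hd2
  rw [hNdef, hKmdef] at hQm ⊢
  rw [g_eq B hm, g_eq B h1, g_eq B h2]
  have e1 := mul_le_mul_of_nonneg_left hl1 ha.le
  have e2 := mul_le_mul_of_nonneg_left hl2 hb.le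
  have hEm : (1 - Bᴴ * (a • M1 + b • M2 + B * Bᴴ)⁻¹ * B).det.re
      = (1 - Bᴴ * N⁻¹ * B).det.re := by rw [hNdef, hKmdef]
  rw [hEm]
  nlinarith [hconc, e1, e2]

end Core


/-- For fixed `K̄ ⪰ 0` and channel matrices `H_r, H_e`, with `H_t = [H_r; H_e]` the
stacked matrix, the conditional mutual information `I(x; y_r | y_e)`, which for positive
definite noise covariance `K_Φ = [[I, Φ],[Φᴴ, I]]` equals
`log det(K_Φ + H_t K̄ H_tᴴ) − log det K_Φ − log det(I + H_e K̄ H_eᴴ)`,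
is convex in `K_Φ` on the set of positive definite matrices of this block form. -/
theorem stmt_5 {nr ne nt : ℕ}
    (Hr : Matrix (Fin nr) (Fin nt) ℂ) (He : Matrix (Fin ne) (Fin nt) ℂ)
    (Kbar : Matrix (Fin nt) (Fin nt) ℂ) (hK : Kbar.PosSemidef) :
    ConvexOn ℝ
      {M : Matrix (Fin nr ⊕ Fin ne) (Fin nr ⊕ Fin ne) ℂ |
        (∃ Φ : Matrix (Fin nr) (Fin ne) ℂ, M = Matrix.fromBlocks 1 Φ Φᴴ 1) ∧ M.PosDef}
      (fun M => Real.log ((M + (Matrix.fromRows Hr He) * Kbar * (Matrix.fromRows Hr He)ᴴ).det.re)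
        - Real.log (M.det.re)
        - Real.log (((1 : Matrix (Fin ne) (Fin ne) ℂ) + He * Kbar * Heᴴ).det.re)) := by
  set Ht := Matrix.fromRows Hr He with hHt
  set c := Real.log (((1 : Matrix (Fin ne) (Fin ne) ℂ) + He * Kbar * Heᴴ).det.re) with hc
  set B := Ht * hK.sqrt with hBdef
  have hBB : B * Bᴴ = Ht * Kbar * Htᴴ := by
    rw [hBdef, conjTranspose_mul, hK.posSemidef_sqrt.isHermitian.eq]
    calc Ht * hK.sqrt * (hK.sqrt * Htᴴ) = Ht * (hK.sqrt * hK.sqrt) * Htᴴ := by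
          simp only [Matrix.mul_assoc]
      _ = Ht * Kbar * Htᴴ := by rw [hK.sqrt_mul_self]
  constructor
  · -- convexity of the constraint set
    rintro M1 ⟨⟨Φ1, rfl⟩, hP1⟩ M2 ⟨⟨Φ2, rfl⟩, hP2⟩ a b ha hb hab
    constructor
    · refine ⟨a • Φ1 + b • Φ2, ?_⟩
      rw [Matrix.fromBlocks_smul, Matrix.fromBlocks_smul, Matrix.fromBlocks_add]
      have h11 : a • (1 : Matrix (Fin nr) (Fin nr) ℂ) + b • 1 = 1 := by
        rw [← add_smul, hab, one_smul]
      have h22 : a • (1 : Matrix (Fin ne) (Fin ne) ℂ) + b • 1 = 1 := by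
        rw [← add_smul, hab, one_smul]
      rw [h11, h22, conjTranspose_add, conjTranspose_smul, conjTranspose_smul,
        star_trivial, star_trivial]
    · rcases ha.eq_or_lt with h0 | ha'
      · have hb1 : b = 1 := by linarith
        rw [← h0, hb1]
        simpa using hP2
      rcases hb.eq_or_lt with h0 | hb'
      · have ha1 : a = 1 := by linarith
        rw [← h0, ha1]
        simpa using hP1
      exact (posDef_real_smul hP1 ha').add (posDef_real_smul hP2 hb')
  · -- the convexity inequality
    rintro M1 ⟨_, hP1⟩ M2 ⟨_, hP2⟩ a b ha hb hab
    simp only [smul_eq_mul]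
    rcases ha.eq_or_lt with h0 | ha'
    · have hb1 : b = 1 := by linarith
      rw [← h0, hb1]
      simp
    rcases hb.eq_or_lt with h0 | hb'
    · have ha1 : a = 1 := by linarith
      rw [← h0, ha1]
      simp
    have hcore := core_ineq B hP1 hP2 ha' hb' hab
    rw [← hBB]
    have hc2 : a * c + b * c = c := by rw [← add_mul, hab, one_mul]
    nlinarith [hcore, hc2]
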